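/- Let λ > 0 and let H_L = −d²/dx² on [−L,L] with self-adjoint boundary conditions given by 2×2 matrices A, B (AB* = BA*, rank(A|B) = 2), such that iA − √λ B is invertible. Then λ is an eigenvalue of H_L if and only if the 2×2 matrix e^{2iL√λ} I + U(λ) σ_x is singular, where U(λ) = (iA − √λ B)^{−1}(iA + √λ B) and σ_x is the Pauli matrix [[0,1],[1,0]]. -/

import Mathlib

open Matrix

lemma hasDerivAt_cexp_mul (c : ℂ) (x : ℝ) :
    HasDerivAt (fun y : ℝ => Complex.exp (c * y)) (c * Complex.exp (c * x)) x := by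
  have h1 : HasDerivAt (fun y : ℂ => Complex.exp (c * y)) (c * Complex.exp (c * x)) (x : ℂ) := by
    exact (((hasDerivAt_id (x:ℂ)).const_mul c).cexp).congr_deriv (by simp [mul_comm])
  exact h1.comp_ofReal

/-- Let `λ > 0` and `H_L = −d²/dx²` on `[−L,L]` with self-adjoint boundary
conditions given by `2×2` matrices `A, B` (`AB* = BA*`, `rank(A|B) = 2`) such that
`iA − √λ B` is invertible. Then `λ` is an eigenvalue of `H_L` (i.e. there is a nonzero solution
of `−φ'' = λφ` satisfying the boundary conditions) iff the matrix
`e^{2iL√λ} I + U(λ) σ_x` is singular, where `U(λ) = (iA − √λB)⁻¹(iA + √λB)` and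
`σ_x = [[0,1],[1,0]]`. -/
theorem stmt19 (A B : Matrix (Fin 2) (Fin 2) ℂ)
    (h1 : A * Bᴴ = B * Aᴴ) (h2 : (Matrix.fromCols A B).rank = 2)
    (L lam : ℝ) (hL : 0 < L) (hlam : 0 < lam)
    (hInv : IsUnit (Complex.I • A - ((Real.sqrt lam : ℝ) : ℂ) • B)) :
    (∃ φ φ' : ℝ → ℂ, (∃ x ∈ Set.Icc (-L) L, φ x ≠ 0) ∧
        (∀ x ∈ Set.Icc (-L) L,
          HasDerivAt φ (φ' x) x ∧ HasDerivAt φ' (-(lam : ℂ) * φ x) x) ∧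
        A.mulVec ![φ L, φ (-L)] = B.mulVec ![-(φ' L), φ' (-L)]) ↔
    ¬ IsUnit (Complex.exp (2 * Complex.I * L * Real.sqrt lam) • (1 : Matrix (Fin 2) (Fin 2) ℂ) +
        ((Complex.I • A - ((Real.sqrt lam : ℝ) : ℂ) • B)⁻¹ *
          (Complex.I • A + ((Real.sqrt lam : ℝ) : ℂ) • B)) * !![0, 1; 1, 0]) := by
  have hk0 : 0 < Real.sqrt lam := Real.sqrt_pos.2 hlam
  set k : ℝ := Real.sqrt lam with hkdef
  have hk2 : ((k:ℂ))^2 = (lam:ℂ) := by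
    norm_cast
    exact Real.sq_sqrt hlam.le
  have hkc : (k:ℂ) ≠ 0 := by exact_mod_cast hk0.ne'
  set C : Matrix (Fin 2) (Fin 2) ℂ := Complex.I • A - (k:ℂ) • B with hC
  set D : Matrix (Fin 2) (Fin 2) ℂ := Complex.I • A + (k:ℂ) • B with hD
  set σ : Matrix (Fin 2) (Fin 2) ℂ := !![0,1;1,0] with hσ
  set T : Matrix (Fin 2) (Fin 2) ℂ :=
    Complex.exp (2 * Complex.I * L * k) • (1 : Matrix (Fin 2) (Fin 2) ℂ) + (C⁻¹ * D) * σ with hT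
  set E : ℂ := Complex.exp (Complex.I * k * L) with hE
  set E' : ℂ := Complex.exp (-(Complex.I * k * L)) with hE'
  set M : Matrix (Fin 2) (Fin 2) ℂ :=
    E • (A + (Complex.I * k) • B) + E' • ((A - (Complex.I * k) • B) * σ) with hM
  have hdetC : IsUnit C.det := (Matrix.isUnit_iff_isUnit_det C).1 hInv
  have hCT : C * T = Complex.exp (2 * Complex.I * L * k) • C + D * σ := by
    rw [hT, Matrix.mul_add, Matrix.mul_smul, Matrix.mul_one, ← Matrix.mul_assoc,
      Matrix.mul_nonsing_inv_cancel_left C D hdetC]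
  have hEE : E' * Complex.exp (2 * Complex.I * L * k) = E := by
    rw [hE', hE, ← Complex.exp_add]; ring_nf
  have hEE2 : (-Complex.I * E') * Complex.exp (2 * Complex.I * L * k) = -Complex.I * E := by
    rw [mul_assoc, hEE]
  have hMeq : M = (-Complex.I * E') • (C * T) := by
    rw [hCT, smul_add, smul_smul, hEE2, ← Matrix.smul_mul]
    have e1 : E • (A + (Complex.I * k) • B) = (-Complex.I * E) • C := by
      rw [hC]; match_scalars
      · linear_combination E * Complex.I_sq
      · ring
    have e2 : E' • (A - (Complex.I * k) • B) = (-Complex.I * E') • D := by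
      rw [hD]; match_scalars
      · linear_combination E' * Complex.I_sq
      · ring
    rw [hM, e1, ← Matrix.smul_mul, e2]
  have hscal : (-Complex.I * E') ≠ 0 := by
    simp only [mul_ne_zero_iff, neg_ne_zero]
    exact ⟨Complex.I_ne_zero, Complex.exp_ne_zero _⟩
  have hdetM : M.det = (-Complex.I * E') ^ 2 * (C.det * T.det) := by
    rw [hMeq, Matrix.det_smul, Matrix.det_mul]
    norm_num
  have hiffT : (¬ IsUnit T) ↔ ∃ u : Fin 2 → ℂ, u ≠ 0 ∧ M.mulVec u = 0 := by
    have h1 : (∃ u : Fin 2 → ℂ, u ≠ 0 ∧ M.mulVec u = 0) ↔ M.det = 0 := by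
      simpa using Matrix.exists_mulVec_eq_zero_iff (M := M)
    rw [h1, hdetM, Matrix.isUnit_iff_isUnit_det, isUnit_iff_ne_zero, not_not]
    constructor
    · intro h; rw [h]; ring
    · intro h
      rcases mul_eq_zero.1 h with h' | h'
      · exact absurd h' (pow_ne_zero 2 hscal)
      · rcases mul_eq_zero.1 h' with h'' | h''
        · exact absurd h'' (isUnit_iff_ne_zero.1 hdetC)
        · exact h''
  rw [hiffT]
  have key : ∀ a b : ℂ, M.mulVec ![a, b] =
      A.mulVec ![a*E + b*E', a*E' + b*E] -
      B.mulVec ![-(Complex.I*(k:ℂ)*(a*E - b*E')), Complex.I*(k:ℂ)*(a*E' - b*E)] := by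
    intro a b
    funext i
    simp only [hM, hσ, Matrix.mulVec, dotProduct, Matrix.mul_apply, Fin.sum_univ_two,
      Matrix.smul_apply, Matrix.add_apply, Matrix.sub_apply, Pi.sub_apply, smul_eq_mul,
      Matrix.cons_val', Matrix.cons_val_zero, Matrix.cons_val_one, Matrix.head_cons,
      Matrix.head_fin_const, Matrix.empty_val', Matrix.cons_val_fin_one, Matrix.of_apply]
    fin_cases i <;> ring
  have hee : ∀ x : ℝ, Complex.exp (-(Complex.I*(k:ℂ)) * x) * Complex.exp ((Complex.I*(k:ℂ)) * x) = 1 := by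
    intro x
    rw [← Complex.exp_add]
    ring_nf
    exact Complex.exp_zero
  have hmemL : (L:ℝ) ∈ Set.Icc (-L) L := ⟨by linarith, le_refl L⟩
  have hmemL' : (-L:ℝ) ∈ Set.Icc (-L) L := ⟨le_refl _, by linarith⟩
  have h2ik : (2*Complex.I*(k:ℂ)) ≠ 0 := by
    simp only [mul_ne_zero_iff]
    exact ⟨⟨two_ne_zero, Complex.I_ne_zero⟩, hkc⟩
  have hexpL1 : Complex.exp ((Complex.I*(k:ℂ)) * (L:ℝ)) = E := by rw [hE]
  have hexpL2 : Complex.exp (-(Complex.I*(k:ℂ)) * (L:ℝ)) = E' := by rw [hE']; congr 1; ring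
  have hexpL3 : Complex.exp ((Complex.I*(k:ℂ)) * ((-L : ℝ):ℂ)) = E' := by
    rw [hE']; congr 1; push_cast; ring
  have hexpL4 : Complex.exp (-(Complex.I*(k:ℂ)) * ((-L : ℝ):ℂ)) = E := by
    rw [hE]; congr 1; push_cast; ring
  constructor
  · rintro ⟨φ, φ', ⟨x₀, hx₀, hφ0⟩, hder, hbc⟩
    -- the two first-order combinations are constant
    have hg0 : ∀ x ∈ Set.Icc (-L) L, HasDerivAt
        (fun x : ℝ => (φ' x + Complex.I*(k:ℂ)*φ x) * Complex.exp (-(Complex.I*(k:ℂ)) * x)) 0 x := by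
      intro x hx
      obtain ⟨h1', h2'⟩ := hder x hx
      have hcomb : HasDerivAt (fun x => φ' x + Complex.I*(k:ℂ)*φ x)
          (-(lam:ℂ)*φ x + Complex.I*(k:ℂ)*φ' x) x := h2'.add (h1'.const_mul _)
      have := hcomb.mul (hasDerivAt_cexp_mul (-(Complex.I*(k:ℂ))) x)
      refine this.congr_deriv (Eq.symm ?_)
      linear_combination (-(Complex.exp (-(Complex.I*(k:ℂ)) * x) * φ x)) * hk2 +
        ((k:ℂ)^2 * φ x * Complex.exp (-(Complex.I*(k:ℂ)) * x)) * Complex.I_sq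
    have hf0 : ∀ x ∈ Set.Icc (-L) L, HasDerivAt
        (fun x : ℝ => (φ' x - Complex.I*(k:ℂ)*φ x) * Complex.exp ((Complex.I*(k:ℂ)) * x)) 0 x := by
      intro x hx
      obtain ⟨h1', h2'⟩ := hder x hx
      have hcomb : HasDerivAt (fun x => φ' x - Complex.I*(k:ℂ)*φ x)
          (-(lam:ℂ)*φ x - Complex.I*(k:ℂ)*φ' x) x := h2'.sub (h1'.const_mul _)
      have := hcomb.mul (hasDerivAt_cexp_mul ((Complex.I*(k:ℂ))) x)
      refine this.congr_deriv (Eq.symm ?_)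
      linear_combination (-(Complex.exp ((Complex.I*(k:ℂ)) * x) * φ x)) * hk2 +
        ((k:ℂ)^2 * φ x * Complex.exp ((Complex.I*(k:ℂ)) * x)) * Complex.I_sq
    have hgc := constant_of_has_deriv_right_zero (a := -L) (b := L)
      (f := fun x : ℝ => (φ' x + Complex.I*(k:ℂ)*φ x) * Complex.exp (-(Complex.I*(k:ℂ)) * x))
      (fun x hx => (hg0 x hx).continuousAt.continuousWithinAt)
      (fun x hx => (hg0 x (Set.Ico_subset_Icc_self hx)).hasDerivWithinAt)
    have hfc := constant_of_has_deriv_right_zero (a := -L) (b := L)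
      (f := fun x : ℝ => (φ' x - Complex.I*(k:ℂ)*φ x) * Complex.exp ((Complex.I*(k:ℂ)) * x))
      (fun x hx => (hf0 x hx).continuousAt.continuousWithinAt)
      (fun x hx => (hf0 x (Set.Ico_subset_Icc_self hx)).hasDerivWithinAt)
    set cg : ℂ := (φ' (-L) + Complex.I*(k:ℂ)*φ (-L)) * Complex.exp (-(Complex.I*(k:ℂ)) * ((-L:ℝ):ℂ)) with hcg
    set cf : ℂ := (φ' (-L) - Complex.I*(k:ℂ)*φ (-L)) * Complex.exp ((Complex.I*(k:ℂ)) * ((-L:ℝ):ℂ)) with hcf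
    have hgx : ∀ x ∈ Set.Icc (-L) L,
        φ' x + Complex.I*(k:ℂ)*φ x = cg * Complex.exp ((Complex.I*(k:ℂ)) * x) := by
      intro x hx
      have h := hgc x hx
      calc φ' x + Complex.I*(k:ℂ)*φ x
          = ((φ' x + Complex.I*(k:ℂ)*φ x) * Complex.exp (-(Complex.I*(k:ℂ)) * x)) *
              Complex.exp ((Complex.I*(k:ℂ)) * x) := by
            linear_combination (-(φ' x + Complex.I*(k:ℂ)*φ x)) * hee x
        _ = cg * Complex.exp ((Complex.I*(k:ℂ)) * x) := by rw [h]
    have hfx : ∀ x ∈ Set.Icc (-L) L,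
        φ' x - Complex.I*(k:ℂ)*φ x = cf * Complex.exp (-(Complex.I*(k:ℂ)) * x) := by
      intro x hx
      have h := hfc x hx
      calc φ' x - Complex.I*(k:ℂ)*φ x
          = ((φ' x - Complex.I*(k:ℂ)*φ x) * Complex.exp ((Complex.I*(k:ℂ)) * x)) *
              Complex.exp (-(Complex.I*(k:ℂ)) * x) := by
            linear_combination (-(φ' x - Complex.I*(k:ℂ)*φ x)) * hee x
        _ = cf * Complex.exp (-(Complex.I*(k:ℂ)) * x) := by rw [h]
    set a : ℂ := cg / (2*Complex.I*(k:ℂ)) with ha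
    set b : ℂ := -(cf / (2*Complex.I*(k:ℂ))) with hb
    have hφx : ∀ x ∈ Set.Icc (-L) L,
        φ x = a * Complex.exp ((Complex.I*(k:ℂ)) * x) + b * Complex.exp (-(Complex.I*(k:ℂ)) * x) := by
      intro x hx
      have hcomb : (2*Complex.I*(k:ℂ)) * φ x =
          cg * Complex.exp ((Complex.I*(k:ℂ)) * x) - cf * Complex.exp (-(Complex.I*(k:ℂ)) * x) := by
        linear_combination (hgx x hx) - (hfx x hx)
      have h2 : φ x = (cg * Complex.exp ((Complex.I*(k:ℂ)) * x) -
          cf * Complex.exp (-(Complex.I*(k:ℂ)) * x)) / (2*Complex.I*(k:ℂ)) := by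
        rw [eq_div_iff h2ik]; linear_combination hcomb
      rw [h2, ha, hb]
      field_simp
      ring
    have hφ'x : ∀ x ∈ Set.Icc (-L) L,
        φ' x = Complex.I*(k:ℂ)*(a * Complex.exp ((Complex.I*(k:ℂ)) * x) -
          b * Complex.exp (-(Complex.I*(k:ℂ)) * x)) := by
      intro x hx
      have h2 : φ' x = (cg * Complex.exp ((Complex.I*(k:ℂ)) * x) +
          cf * Complex.exp (-(Complex.I*(k:ℂ)) * x)) / 2 := by
        rw [eq_div_iff (two_ne_zero (α := ℂ))]
        linear_combination (hgx x hx) + (hfx x hx)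
      rw [h2, ha, hb]
      field_simp
      ring
    refine ⟨![a, b], ?_, ?_⟩
    · intro h0
      have ha0 : a = 0 := by simpa using congrFun h0 0
      have hb0 : b = 0 := by simpa using congrFun h0 1
      apply hφ0
      rw [hφx x₀ hx₀, ha0, hb0]
      ring
    · rw [key a b, sub_eq_zero]
      have e1 : φ L = a*E + b*E' := by
        rw [hφx L hmemL, hexpL1, hexpL2]
      have e2 : φ (-L) = a*E' + b*E := by
        rw [hφx (-L) hmemL', hexpL3, hexpL4]
      have e3 : φ' L = Complex.I*(k:ℂ)*(a*E - b*E') := by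
        rw [hφ'x L hmemL, hexpL1, hexpL2]
      have e4 : φ' (-L) = Complex.I*(k:ℂ)*(a*E' - b*E) := by
        rw [hφ'x (-L) hmemL', hexpL3, hexpL4]
      rw [e1, e2, e3, e4] at hbc
      exact hbc
  · rintro ⟨u, hu0, hMu⟩
    set a : ℂ := u 0 with hau
    set b : ℂ := u 1 with hbu
    have hab : ![a, b] = u := by
      funext i; fin_cases i <;> rfl
    have hMu' : M.mulVec ![a, b] = 0 := by rw [hab]; exact hMu
    refine ⟨fun x : ℝ => a * Complex.exp ((Complex.I*(k:ℂ)) * x) +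
        b * Complex.exp (-(Complex.I*(k:ℂ)) * x),
      fun x : ℝ => Complex.I*(k:ℂ) * (a * Complex.exp ((Complex.I*(k:ℂ)) * x) -
        b * Complex.exp (-(Complex.I*(k:ℂ)) * x)), ?_, ?_, ?_⟩
    · -- nonvanishing
      by_contra hcon
      push_neg at hcon
      have h0 : a + b = 0 := by
        have := hcon 0 ⟨by linarith, by linarith⟩
        simpa using this
      set t : ℝ := min L (Real.pi / (2*k)) with htdef
      have hπ := Real.pi_pos
      have ht0 : 0 < t := lt_min hL (by positivity)
      have htL : t ≤ L := min_le_left _ _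
      have htk : k * t ≤ Real.pi / 2 := by
        have h := min_le_right L (Real.pi / (2*k))
        calc k * t ≤ k * (Real.pi / (2*k)) := by
              exact mul_le_mul_of_nonneg_left h hk0.le
          _ = Real.pi / 2 := by field_simp
      have ht := hcon t ⟨by linarith, htL⟩
      have hfac : a * (Complex.exp ((Complex.I*(k:ℂ)) * t) -
          Complex.exp (-(Complex.I*(k:ℂ)) * t)) = 0 := by
        linear_combination ht - Complex.exp (-(Complex.I*(k:ℂ)) * t) * h0
      have hne : Complex.exp ((Complex.I*(k:ℂ)) * t) -
          Complex.exp (-(Complex.I*(k:ℂ)) * t) ≠ 0 := by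
        rw [sub_ne_zero]
        intro heq
        obtain ⟨n, hn⟩ := Complex.exp_eq_exp_iff_exists_int.1 heq
        have hkt : ((k*t : ℝ) : ℂ) = (n:ℂ) * (Real.pi : ℝ) := by
          push_cast
          linear_combination (-Complex.I/2) * hn +
            ((k:ℂ)*(t:ℂ) - (n:ℂ)*((Real.pi:ℝ):ℂ)) * Complex.I_sq
        have hktr : k * t = (n:ℝ) * Real.pi := by exact_mod_cast hkt
        have hkt0 : 0 < k * t := mul_pos hk0 ht0
        rcases le_or_gt (n : ℝ) 0 with hn0 | hn0
        · nlinarith [Real.pi_pos]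
        · have hn1 : (1:ℝ) ≤ (n:ℝ) := by
            have : (0:ℤ) < n := by exact_mod_cast hn0
            exact_mod_cast this
          nlinarith [Real.pi_pos]
      have ha0 : a = 0 := by
        rcases mul_eq_zero.1 hfac with h | h
        · exact h
        · exact absurd h hne
      have hb0 : b = 0 := by linear_combination h0 - ha0
      apply hu0
      funext i
      fin_cases i
      · show u 0 = 0; rw [← hau]; exact ha0
      · show u 1 = 0; rw [← hbu]; exact hb0
    · intro x hx
      constructor
      · have d1 := (hasDerivAt_cexp_mul ((Complex.I*(k:ℂ))) x).const_mul a
        have d2 := (hasDerivAt_cexp_mul (-(Complex.I*(k:ℂ))) x).const_mul b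
        have := d1.add d2
        refine this.congr_deriv (Eq.symm ?_)
        ring
      · have d1 := (hasDerivAt_cexp_mul ((Complex.I*(k:ℂ))) x).const_mul a
        have d2 := (hasDerivAt_cexp_mul (-(Complex.I*(k:ℂ))) x).const_mul b
        have := (d1.sub d2).const_mul (Complex.I*(k:ℂ))
        refine this.congr_deriv (Eq.symm ?_)
        linear_combination (a * Complex.exp ((Complex.I*(k:ℂ)) * x) +
            b * Complex.exp (-(Complex.I*(k:ℂ)) * x)) * hk2 +
          (-(k:ℂ)^2 * (a * Complex.exp ((Complex.I*(k:ℂ)) * x) +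
            b * Complex.exp (-(Complex.I*(k:ℂ)) * x))) * Complex.I_sq
    · have h := key a b
      rw [hMu'] at h
      have h2 : A.mulVec ![a*E + b*E', a*E' + b*E] =
          B.mulVec ![-(Complex.I*(k:ℂ)*(a*E - b*E')), Complex.I*(k:ℂ)*(a*E' - b*E)] :=
        sub_eq_zero.1 h.symm
      have e1 : a * Complex.exp ((Complex.I*(k:ℂ)) * ((L:ℝ):ℂ)) +
          b * Complex.exp (-(Complex.I*(k:ℂ)) * ((L:ℝ):ℂ)) = a*E + b*E' := by
        rw [hexpL1, hexpL2]
      have e2 : a * Complex.exp ((Complex.I*(k:ℂ)) * ((-L:ℝ):ℂ)) +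
          b * Complex.exp (-(Complex.I*(k:ℂ)) * ((-L:ℝ):ℂ)) = a*E' + b*E := by
        rw [hexpL3, hexpL4]
      have e3 : Complex.I*(k:ℂ) * (a * Complex.exp ((Complex.I*(k:ℂ)) * ((L:ℝ):ℂ)) -
          b * Complex.exp (-(Complex.I*(k:ℂ)) * ((L:ℝ):ℂ))) = Complex.I*(k:ℂ)*(a*E - b*E') := by
        rw [hexpL1, hexpL2]
      have e4 : Complex.I*(k:ℂ) * (a * Complex.exp ((Complex.I*(k:ℂ)) * ((-L:ℝ):ℂ)) -
          b * Complex.exp (-(Complex.I*(k:ℂ)) * ((-L:ℝ):ℂ))) = Complex.I*(k:ℂ)*(a*E' - b*E) := by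
        rw [hexpL3, hexpL4]
      show A.mulVec ![_, _] = B.mulVec ![_, _]
      rw [show (fun x : ℝ => a * Complex.exp ((Complex.I*(k:ℂ)) * x) +
        b * Complex.exp (-(Complex.I*(k:ℂ)) * x)) L = a*E + b*E' from e1]
      rw [show (fun x : ℝ => a * Complex.exp ((Complex.I*(k:ℂ)) * x) +
        b * Complex.exp (-(Complex.I*(k:ℂ)) * x)) (-L) = a*E' + b*E from e2]
      rw [show (fun x : ℝ => Complex.I*(k:ℂ) * (a * Complex.exp ((Complex.I*(k:ℂ)) * x) -
        b * Complex.exp (-(Complex.I*(k:ℂ)) * x))) L = Complex.I*(k:ℂ)*(a*E - b*E') from e3]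
      rw [show (fun x : ℝ => Complex.I*(k:ℂ) * (a * Complex.exp ((Complex.I*(k:ℂ)) * x) -
        b * Complex.exp (-(Complex.I*(k:ℂ)) * x))) (-L) = Complex.I*(k:ℂ)*(a*E' - b*E) from e4]
      exact h2
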